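/- Let M be a model, w a world, Γ a finite set of formulas, ann an annotation for Γ, and chn a function such that (M, w, chn) annotated-satisfies (Γ, ann). Let φ be a formula with M, w ⊨ φ such that φ ∉ Ev or ann(φ) = ⊥. Then there exists an extension chn' of chn such that (M, w, chn') annotated-satisfies (Γ ∪ {φ}, ann). -/

import Mathlib

mutual
inductive Fml : Type where
  | var : ℕ → Fml
  | neg : Fml → Fml
  | and : Fml → Fml → Fml
  | or : Fml → Fml → Fml
  | dia : Prog → Fml → Fml
  | box : Prog → Fml → Fml
  deriving DecidableEq
inductive Prog : Type where
  | atom : ℕ → Prog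
  | conv : ℕ → Prog
  | seq : Prog → Prog → Prog
  | choice : Prog → Prog → Prog
  | star : Prog → Prog
  | test : Fml → Prog
  deriving DecidableEq
end

structure Model (W : Type) where
  R : ℕ → W → W → Prop
  V : ℕ → W → Prop

mutual
def Sat {W : Type} (M : Model W) : W → Fml → Prop
  | w, .var p => M.V p w
  | w, .neg φ => ¬ Sat M w φ
  | w, .and φ ψ => Sat M w φ ∧ Sat M w ψ
  | w, .or φ ψ => Sat M w φ ∨ Sat M w ψ
  | w, .dia γ φ => ∃ v, PRel M γ w v ∧ Sat M v φ
  | w, .box γ φ => ∀ v, PRel M γ w v → Sat M v φ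
def PRel {W : Type} (M : Model W) : Prog → W → W → Prop
  | .atom a, w, v => M.R a w v
  | .conv a, w, v => M.R a v w
  | .seq γ δ, w, v => ∃ u, PRel M γ w u ∧ PRel M δ u v
  | .choice γ δ, w, v => PRel M γ w v ∨ PRel M δ w v
  | .star γ, w, v => Relation.ReflTransGen (fun a b => PRel M γ a b) w v
  | .test φ, w, v => w = v ∧ Sat M w φ
end
mutual
def IsNNF : Fml → Prop
  | .var _ => True
  | .neg (.var _) => True
  | .neg _ => False
  | .and φ ψ => IsNNF φ ∧ IsNNF ψ
  | .or φ ψ => IsNNF φ ∧ IsNNF ψ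
  | .dia γ φ => IsNNFP γ ∧ IsNNF φ
  | .box γ φ => IsNNFP γ ∧ IsNNF φ
def IsNNFP : Prog → Prop
  | .atom _ => True
  | .conv _ => True
  | .seq γ δ => IsNNFP γ ∧ IsNNFP δ
  | .choice γ δ => IsNNFP γ ∧ IsNNFP δ
  | .star γ => IsNNFP γ
  | .test φ => IsNNF φ
end

mutual
/-- `nnf φ` is the negation normal form of `φ`. -/
def nnf : Fml → Fml
  | .var p => .var p
  | .neg φ => nnfNeg φ
  | .and φ ψ => .and (nnf φ) (nnf ψ)
  | .or φ ψ => .or (nnf φ) (nnf ψ)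
  | .dia γ φ => .dia γ (nnf φ)
  | .box γ φ => .box γ (nnf φ)
/-- `nnfNeg φ = nnf (¬ φ)`, written `∼φ`. -/
def nnfNeg : Fml → Fml
  | .var p => .neg (.var p)
  | .neg φ => nnf φ
  | .and φ ψ => .or (nnfNeg φ) (nnfNeg ψ)
  | .or φ ψ => .and (nnfNeg φ) (nnfNeg ψ)
  | .dia γ φ => .box γ (nnfNeg φ)
  | .box γ φ => .dia γ (nnfNeg φ)
end

/-- Literal programs: atomic programs or converses of atomic programs. -/
inductive Lit : Type where
  | atom : ℕ → Lit
  | conv : ℕ → Lit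
  deriving DecidableEq

def Lit.toProg : Lit → Prog
  | .atom a => .atom a
  | .conv a => .conv a

/-- The converse `l⁻` of a literal program. -/
def Lit.inv : Lit → Lit
  | .atom a => .conv a
  | .conv a => .atom a

/-- The reduction relation `⤳` on ⟨·⟩-formulae. -/
inductive Red : Fml → Fml → Prop where
  | seq (γ δ χ) : Red (.dia (.seq γ δ) χ) (.dia γ (.dia δ χ))
  | choiceL (γ δ χ) : Red (.dia (.choice γ δ) χ) (.dia γ χ)
  | choiceR (γ δ χ) : Red (.dia (.choice γ δ) χ) (.dia δ χ)
  | star1 (γ χ) : Red (.dia (.star γ) χ) χ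
  | star2 (γ χ) : Red (.dia (.star γ) χ) (.dia γ (.dia (.star γ) χ))
  | test (ϕ χ) : Red (.dia (.test ϕ) χ) χ

/-- `InPre ψ φ` means `φ ∈ pre(ψ)`, i.e. `φ = ⟨γ₁⟩…⟨γ_k⟩ψ`. -/
inductive InPre (ψ : Fml) : Fml → Prop where
  | base : InPre ψ ψ
  | step (γ φ) : InPre ψ φ → InPre ψ (.dia γ φ)

/-- `φ` is an eventuality: `φ = ⟨γ₁⟩…⟨γ_k⟩⟨γ*⟩ψ`. -/
def IsEv (φ : Fml) : Prop := ∃ γ ψ, InPre (.dia (.star γ) ψ) φ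

mutual
/-- Size of formulas. -/
def fsize : Fml → ℕ
  | .var _ => 1
  | .neg (.var _) => 1
  | .neg φ => 1 + fsize φ
  | .and φ ψ => 1 + fsize φ + fsize ψ
  | .or φ ψ => 1 + fsize φ + fsize ψ
  | .dia γ φ => psize γ + fsize φ
  | .box γ φ => psize γ + fsize φ
/-- Size of programs. -/
def psize : Prog → ℕ
  | .atom _ => 1
  | .conv _ => 1
  | .seq γ δ => 1 + psize γ + psize δ
  | .choice γ δ => 1 + psize γ + psize δ
  | .star γ => 1 + psize γ
  | .test φ => 1 + fsize φ
end
/-- One decomposition step generating the closure `cl(φ)`. -/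
inductive ClStep : Fml → Fml → Prop where
  | diaLit (l : Lit) (ψ) : ClStep (.dia l.toProg ψ) ψ
  | boxLit (l : Lit) (ψ) : ClStep (.box l.toProg ψ) ψ
  | andL (φ ψ) : ClStep (.and φ ψ) φ
  | andR (φ ψ) : ClStep (.and φ ψ) ψ
  | orL (φ ψ) : ClStep (.or φ ψ) φ
  | orR (φ ψ) : ClStep (.or φ ψ) ψ
  | boxChoiceL (γ δ φ) : ClStep (.box (.choice γ δ) φ) (.box γ φ)
  | boxChoiceR (γ δ φ) : ClStep (.box (.choice γ δ) φ) (.box δ φ)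
  | boxStar1 (γ φ) : ClStep (.box (.star γ) φ) φ
  | boxStar2 (γ φ) : ClStep (.box (.star γ) φ) (.box γ (.box (.star γ) φ))
  | diaTest1 (ψ φ) : ClStep (.dia (.test ψ) φ) φ
  | diaTest2 (ψ φ) : ClStep (.dia (.test ψ) φ) ψ
  | diaSeq (γ δ φ) : ClStep (.dia (.seq γ δ) φ) (.dia γ (.dia δ φ))
  | boxSeq (γ δ φ) : ClStep (.box (.seq γ δ) φ) (.box γ (.box δ φ))
  | diaChoiceL (γ δ φ) : ClStep (.dia (.choice γ δ) φ) (.dia γ φ)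
  | diaChoiceR (γ δ φ) : ClStep (.dia (.choice γ δ) φ) (.dia δ φ)
  | diaStar1 (γ φ) : ClStep (.dia (.star γ) φ) φ
  | diaStar2 (γ φ) : ClStep (.dia (.star γ) φ) (.dia γ (.dia (.star γ) φ))
  | boxTest1 (ψ φ) : ClStep (.box (.test ψ) φ) φ
  | boxTest2 (ψ φ) : ClStep (.box (.test ψ) φ) (nnfNeg ψ)

/-- The closure `cl(φ)`: the least set containing `φ` and closed under `ClStep`. -/
def Cl (φ : Fml) : Set Fml := {ψ | Relation.ReflTransGen ClStep φ ψ}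

/-- A single step of a (model) chain: a literal-program diamond is instantiated,
otherwise a `⤳`-reduction happens at the same world. -/
def ChainStep {W : Type} (M : Model W) : (W × Fml) → (W × Fml) → Prop
  | (w, .dia (.atom a) χ), (w', χ') => χ' = χ ∧ M.R a w w'
  | (w, .dia (.conv a) χ), (w', χ') => χ' = χ ∧ M.R a w' w
  | (w, χ), (w', χ') => Red χ χ' ∧ w' = w

/-- `σ` is a model chain for `(M, w, φ, ψ)`. -/
def ModelChain {W : Type} (M : Model W) (w : W) (φ ψ : Fml) (σ : List (W × Fml)) : Prop :=
  ∃ h : σ ≠ [], σ.head h = (w, φ) ∧ (σ.getLast h).2 = ψ ∧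
    (∀ p ∈ σ, Sat M p.1 p.2) ∧
    ∀ i, (h1 : i + 1 < σ.length) →
      ChainStep M (σ.get ⟨i, by omega⟩) (σ.get ⟨i + 1, h1⟩)

open Classical in
/-- `ex φ`: the largest non-eventuality `ψ` with `φ ∈ pre(ψ)`. -/
noncomputable def ex : Fml → Fml
  | .dia γ ψ => if IsEv (.dia γ ψ) then ex ψ else .dia γ ψ
  | φ => φ

mutual
/-- `SubF χ φ`: `χ` is a subformula of the formula `φ`. -/
inductive SubF : Fml → Fml → Prop where
  | refl (φ) : SubF φ φ
  | neg {χ φ} : SubF χ φ → SubF χ (.neg φ)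
  | andL {χ φ ψ} : SubF χ φ → SubF χ (.and φ ψ)
  | andR {χ φ ψ} : SubF χ ψ → SubF χ (.and φ ψ)
  | orL {χ φ ψ} : SubF χ φ → SubF χ (.or φ ψ)
  | orR {χ φ ψ} : SubF χ ψ → SubF χ (.or φ ψ)
  | diaF {χ γ φ} : SubF χ φ → SubF χ (.dia γ φ)
  | diaP {χ γ φ} : SubP χ γ → SubF χ (.dia γ φ)
  | boxF {χ γ φ} : SubF χ φ → SubF χ (.box γ φ)
  | boxP {χ γ φ} : SubP χ γ → SubF χ (.box γ φ)
/-- `SubP χ γ`: `χ` is a subformula of the program `γ`. -/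
inductive SubP : Fml → Prog → Prop where
  | seqL {χ γ δ} : SubP χ γ → SubP χ (.seq γ δ)
  | seqR {χ γ δ} : SubP χ δ → SubP χ (.seq γ δ)
  | choiceL {χ γ δ} : SubP χ γ → SubP χ (.choice γ δ)
  | choiceR {χ γ δ} : SubP χ δ → SubP χ (.choice γ δ)
  | star {χ γ} : SubP χ γ → SubP χ (.star γ)
  | test {χ φ} : SubF χ φ → SubP χ (.test φ)
end
/-- `ann` is an annotation for `Γ`: it maps some eventualities `φ ∈ Γ`
to a formula `ann φ ∈ Γ` with `φ ⤳ ann φ`. -/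
def IsAnnotation (Γ : Set Fml) (ann : Fml → Option Fml) : Prop :=
  ∀ φ φ', ann φ = some φ' → φ ∈ Γ ∧ IsEv φ ∧ φ' ∈ Γ ∧ Red φ φ'

/-- `ann` is full on `Γ`: it is defined on all eventualities of `Γ`. -/
def FullAnn (Γ : Set Fml) (ann : Fml → Option Fml) : Prop :=
  ∀ φ ∈ Γ, IsEv φ → (ann φ).isSome

/-- `ann` is non-cyclic: there is no cycle `φ₀, …, φ_n` with `ann φ_i = φ_{i+1 mod n+1}`. -/
def NonCyclic (ann : Fml → Option Fml) : Prop :=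
  ¬ ∃ (n : ℕ) (f : ℕ → Fml), (∀ i < n, ann (f i) = some (f (i + 1))) ∧ ann (f n) = some (f 0)

/-- One step of iterating an annotation (identity where undefined). -/
def annStep (ann : Fml → Option Fml) (φ : Fml) : Fml := (ann φ).getD φ

/-- The pure-formula version of a chain step:
if `χ = ⟨l⟩χ₀` for a literal program `l` then `χ' = χ₀`, else `χ ⤳ χ'`. -/
def FStep : Fml → Fml → Prop
  | .dia (.atom _) χ, χ' => χ' = χ
  | .dia (.conv _) χ, χ' => χ' = χ
  | χ, χ' => Red χ χ'

mutual
/-- The atomic program `d` occurs in a formula. -/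
def OccursF (d : ℕ) : Fml → Prop
  | .var _ => False
  | .neg φ => OccursF d φ
  | .and φ ψ => OccursF d φ ∨ OccursF d ψ
  | .or φ ψ => OccursF d φ ∨ OccursF d ψ
  | .dia γ φ => OccursP d γ ∨ OccursF d φ
  | .box γ φ => OccursP d γ ∨ OccursF d φ
/-- The atomic program `d` occurs in a program (as `d` or `d⁻`). -/
def OccursP (d : ℕ) : Prog → Prop
  | .atom a => a = d
  | .conv a => a = d
  | .seq γ δ => OccursP d γ ∨ OccursP d δ
  | .choice γ δ => OccursP d γ ∨ OccursP d δ
  | .star γ => OccursP d γ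
  | .test φ => OccursF d φ
end

/-- `(M, w, chn)` annotated-satisfies `(Γ, ann)`. -/
def AnnSat {W : Type} (M : Model W) (w : W)
    (chn : Fml → Option (List (W × Fml))) (Γ : Set Fml) (ann : Fml → Option Fml) : Prop :=
  (∀ ψ ∈ Γ, Sat M w ψ) ∧
  (∀ ψ ∈ Γ, IsEv ψ → (chn ψ).isSome) ∧
  (∀ ψ σ, IsEv ψ → chn ψ = some σ →
    ModelChain M w ψ (ex ψ) σ ∧
    (∀ i, (h : i < σ.length) → ∀ χ, σ.get ⟨i, h⟩ = (w, χ) → IsEv χ → chn χ = some (σ.drop i)) ∧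
    (∀ ψ', ann ψ = some ψ' → ∃ h : 1 < σ.length, σ.get ⟨1, h⟩ = (w, ψ')))

section AuxDev

/-! ### Basic facts about `IsEv`, `ex`, sizes -/

lemma isEv_dia {γ : Prog} {ψ : Fml} :
    IsEv (.dia γ ψ) ↔ (∃ g, γ = .star g) ∨ IsEv ψ := by
  constructor
  · rintro ⟨g, χ, hp⟩
    cases hp with
    | base => exact Or.inl ⟨g, rfl⟩
    | step γ' φ' h => exact Or.inr ⟨g, χ, h⟩
  · rintro (⟨g, rfl⟩ | ⟨g, χ, hp⟩)
    · exact ⟨g, ψ, .base⟩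
    · exact ⟨g, χ, .step _ _ hp⟩

lemma isEv_shape {φ : Fml} (h : IsEv φ) : ∃ γ ψ, φ = .dia γ ψ := by
  obtain ⟨g, χ, hp⟩ := h
  cases hp with
  | base => exact ⟨_, _, rfl⟩
  | step γ' φ' h => exact ⟨_, _, rfl⟩

lemma ex_dia_ev {γ : Prog} {ψ : Fml} (h : IsEv (Fml.dia γ ψ)) :
    ex (.dia γ ψ) = ex ψ := by
  rw [ex, if_pos h]

lemma ex_not_ev {φ : Fml} (h : ¬ IsEv φ) : ex φ = φ := by
  cases φ
  case dia γ ψ => rw [ex, if_neg h]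
  all_goals (rw [ex]; intro γ ψ hc; exact Fml.noConfusion hc)

lemma psize_pos (γ : Prog) : 0 < psize γ := by cases γ <;> simp [psize]

lemma sat_dia {W : Type} {M : Model W} {u : W} {γ : Prog} {ψ : Fml} :
    Sat M u (.dia γ ψ) ↔ ∃ v, PRel M γ u v ∧ Sat M v ψ := by simp [Sat]

/-! ### Chains -/

inductive Ch {W : Type} (M : Model W) : List (W × Fml) → Prop
  | sing (p) : Sat M p.1 p.2 → Ch M [p]
  | cons (p q σ) : Sat M p.1 p.2 → ChainStep M p q → Ch M (q :: σ) → Ch M (p :: q :: σ)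

variable {W : Type} {M : Model W}

lemma Ch.ne_nil {σ : List (W × Fml)} (h : Ch M σ) : σ ≠ [] := by
  cases h <;> simp

lemma Ch.sat {σ : List (W × Fml)} (h : Ch M σ) : ∀ p ∈ σ, Sat M p.1 p.2 := by
  induction h with
  | sing p hp => simpa using hp
  | cons p q σ hp hs hc ih =>
    intro r hr
    rcases List.mem_cons.1 hr with rfl | hr
    · exact hp
    · exact ih r hr

lemma Ch.tail {p : W × Fml} {σ : List (W × Fml)} (h : Ch M (p :: σ)) (hne : σ ≠ []) :
    Ch M σ := by
  cases h with
  | sing => exact absurd rfl hne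
  | cons _ q σ' _ _ hc => exact hc

lemma Ch.head_sat {p : W × Fml} {σ : List (W × Fml)} (h : Ch M (p :: σ)) :
    Sat M p.1 p.2 := h.sat p (by simp)

lemma Ch.suffix : ∀ (l₁ l₂ : List (W × Fml)), Ch M (l₁ ++ l₂) → l₂ ≠ [] → Ch M l₂ := by
  intro l₁
  induction l₁ with
  | nil => simpa using fun _ h _ => h
  | cons x l ih =>
    intro l₂ h hne
    refine ih l₂ (h.tail ?_) hne
    intro hc
    rcases List.append_eq_nil_iff.1 hc with ⟨-, rfl⟩
    exact hne rfl

lemma Ch.drop {σ : List (W × Fml)} (h : Ch M σ) (i : ℕ) (hi : i < σ.length) :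
    Ch M (σ.drop i) := by
  refine Ch.suffix (σ.take i) (σ.drop i) (by rwa [List.take_append_drop]) ?_
  intro hc
  rw [List.drop_eq_nil_iff] at hc
  omega

lemma Ch.step {σ : List (W × Fml)} (h : Ch M σ) :
    ∀ i (hI : i + 1 < σ.length),
      ChainStep M (σ.get ⟨i, by omega⟩) (σ.get ⟨i + 1, hI⟩) := by
  induction h with
  | sing p hp => intro i hI; simp at hI
  | cons p q σ hp hs hc ih =>
    intro i hI
    cases i with
    | zero => exact hs
    | succ j =>
      have hI' : j + 1 < (q :: σ).length := by simpa using hI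
      exact ih j hI'

lemma ch_of : ∀ (σ : List (W × Fml)), σ ≠ [] → (∀ p ∈ σ, Sat M p.1 p.2) →
    (∀ i (hI : i + 1 < σ.length), ChainStep M (σ.get ⟨i, by omega⟩) (σ.get ⟨i + 1, hI⟩)) →
    Ch M σ := by
  intro σ
  induction σ with
  | nil => simp
  | cons p l ih =>
    intro _ hsat hstep
    cases l with
    | nil => exact .sing p (hsat p (by simp))
    | cons q l' =>
      refine .cons p q l' (hsat p (by simp)) (hstep 0 (by simp)) ?_
      refine ih (by simp) (fun r hr => hsat r (by simp [hr])) ?_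
      intro i hI
      have hI2 : (i + 1) + 1 < (p :: q :: l').length := by simpa using Nat.succ_lt_succ hI
      exact hstep (i + 1) hI2

/-! ### getLast? helpers -/

lemma gl_cons_append {α : Type*} (a : α) (l₁ l₂ : List α) (h : l₂ ≠ []) :
    (a :: (l₁ ++ l₂)).getLast? = l₂.getLast? := by
  rw [show a :: (l₁ ++ l₂) = (a :: l₁) ++ l₂ by simp, List.getLast?_append]
  obtain ⟨x, hx⟩ : ∃ x, l₂.getLast? = some x := ⟨l₂.getLast h, List.getLast?_eq_getLast h⟩
  rw [hx]; rfl

lemma gl_append {α : Type*} (l₁ l₂ : List α) (h : l₂ ≠ []) :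
    (l₁ ++ l₂).getLast? = l₂.getLast? := by
  rw [List.getLast?_append]
  obtain ⟨x, hx⟩ : ∃ x, l₂.getLast? = some x := ⟨l₂.getLast h, List.getLast?_eq_getLast h⟩
  rw [hx]; rfl

lemma gl_drop {α : Type*} (l : List α) (i : ℕ) (hi : i < l.length) :
    (l.drop i).getLast? = l.getLast? := by
  conv_rhs => rw [← List.take_append_drop i l]
  rw [gl_append]
  intro hc
  rw [List.drop_eq_nil_iff] at hc
  omega

end AuxDev
section AuxDev2
variable {W : Type} {M : Model W}

lemma chain_of_prel_aux : ∀ (n : ℕ) (γ : Prog), psize γ ≤ n → ∀ (u v : W), PRel M γ u v →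
    ∀ (ψ : Fml) (σ : List (W × Fml)) (t : Fml), IsEv ψ → ex ψ = t →
    Ch M ((v, ψ) :: σ) →
    ∃ ρ, Ch M ((u, .dia γ ψ) :: (ρ ++ (v, ψ) :: σ)) ∧
      ∀ p ∈ (u, Fml.dia γ ψ) :: ρ, IsEv p.2 → ex p.2 = t := by
  intro n
  induction n with
  | zero =>
    intro γ hn
    exact absurd hn (by have := psize_pos γ; omega)
  | succ n ihn => ?_
  intro γ hn
  cases γ with
  | atom a =>
    intro u v hp ψ σ t hev hex hch
    rw [show PRel M (.atom a) u v = M.R a u v from rfl] at hp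
    have hsatu : Sat M u (.dia (.atom a) ψ) := sat_dia.2 ⟨v, hp, hch.head_sat⟩
    refine ⟨[], .cons _ _ _ hsatu ⟨rfl, hp⟩ hch, ?_⟩
    rintro p hp' hevp
    simp only [List.mem_singleton] at hp'
    subst hp'
    rw [show ex (Fml.dia (.atom a) ψ) = ex ψ from ex_dia_ev hevp, hex]
  | conv a =>
    intro u v hp ψ σ t hev hex hch
    rw [show PRel M (.conv a) u v = M.R a v u from rfl] at hp
    have hsatu : Sat M u (.dia (.conv a) ψ) := sat_dia.2 ⟨v, hp, hch.head_sat⟩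
    refine ⟨[], .cons _ _ _ hsatu ⟨rfl, hp⟩ hch, ?_⟩
    rintro p hp' hevp
    simp only [List.mem_singleton] at hp'
    subst hp'
    rw [show ex (Fml.dia (.conv a) ψ) = ex ψ from ex_dia_ev hevp, hex]
  | seq γ δ =>
    intro u v hp ψ σ t hev hex hch
    obtain ⟨m, h1, h2⟩ : ∃ m, PRel M γ u m ∧ PRel M δ m v := by simpa [PRel] using hp
    have hevδ : IsEv (.dia δ ψ) := isEv_dia.2 (Or.inr hev)
    have hszδ : psize δ ≤ n := by simp [psize] at hn; omega
    have hszγ : psize γ ≤ n := by simp [psize] at hn; omega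
    obtain ⟨ρ₁, hc₁, hcoh₁⟩ := ihn δ hszδ m v h2 ψ σ t hev hex hch
    have hexδ : ex (.dia δ ψ) = t := by rw [ex_dia_ev hevδ, hex]
    obtain ⟨ρ₂, hc₂, hcoh₂⟩ := ihn γ hszγ u m h1 (.dia δ ψ) (ρ₁ ++ (v, ψ) :: σ) t hevδ hexδ hc₁
    have hsatu : Sat M u (.dia (.seq γ δ) ψ) :=
      sat_dia.2 ⟨v, by simp only [PRel]; exact ⟨m, h1, h2⟩, hch.head_sat⟩
    have hc₃ : Ch M ((u, .dia (.seq γ δ) ψ) :: (u, .dia γ (.dia δ ψ)) ::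
        (ρ₂ ++ (m, .dia δ ψ) :: (ρ₁ ++ (v, ψ) :: σ))) :=
      .cons _ _ _ hsatu ⟨Red.seq γ δ ψ, rfl⟩ hc₂
    refine ⟨(u, .dia γ (.dia δ ψ)) :: (ρ₂ ++ (m, .dia δ ψ) :: ρ₁), ?_, ?_⟩
    · simpa using hc₃
    · intro p hp' hevp
      simp only [List.mem_cons, List.mem_append] at hp'
      rcases hp' with rfl | hp' | hp' | rfl | hp'
      · rw [show ((u : W), Fml.dia (γ.seq δ) ψ).2 = Fml.dia (γ.seq δ) ψ from rfl] at hevp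
        exact (ex_dia_ev hevp).trans hex
      · exact hcoh₂ p (by simp [hp']) hevp
      · exact hcoh₂ p (by simp [hp']) hevp
      · exact hcoh₁ _ (by simp) hevp
      · exact hcoh₁ p (by simp [hp']) hevp
  | choice γ δ =>
    intro u v hp ψ σ t hev hex hch
    have hszδ : psize δ ≤ n := by simp [psize] at hn; omega
    have hszγ : psize γ ≤ n := by simp [psize] at hn; omega
    have hp' : PRel M γ u v ∨ PRel M δ u v := by simpa [PRel] using hp
    have hsatu : Sat M u (.dia (.choice γ δ) ψ) :=
      sat_dia.2 ⟨v, by simpa [PRel] using hp', hch.head_sat⟩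
    rcases hp' with h1 | h1
    · obtain ⟨ρ₁, hc₁, hcoh₁⟩ := ihn γ hszγ u v h1 ψ σ t hev hex hch
      have hstep : ChainStep M (u, .dia (.choice γ δ) ψ) (u, .dia γ ψ) :=
        ⟨Red.choiceL γ δ ψ, rfl⟩
      refine ⟨(u, .dia γ ψ) :: ρ₁, ?_, ?_⟩
      · simpa using Ch.cons _ _ _ hsatu hstep hc₁
      · intro p hp' hevp
        rcases List.mem_cons.1 hp' with rfl | hp'
        · rw [ex_dia_ev hevp, hex]
        · exact hcoh₁ p hp' hevp
    · obtain ⟨ρ₁, hc₁, hcoh₁⟩ := ihn δ hszδ u v h1 ψ σ t hev hex hch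
      have hstep : ChainStep M (u, .dia (.choice γ δ) ψ) (u, .dia δ ψ) :=
        ⟨Red.choiceR γ δ ψ, rfl⟩
      refine ⟨(u, .dia δ ψ) :: ρ₁, ?_, ?_⟩
      · simpa using Ch.cons _ _ _ hsatu hstep hc₁
      · intro p hp' hevp
        rcases List.mem_cons.1 hp' with rfl | hp'
        · rw [ex_dia_ev hevp, hex]
        · exact hcoh₁ p hp' hevp
  | star γ =>
    intro u v hp ψ σ t hev hex hch
    have hszγ : psize γ ≤ n := by simp [psize] at hn; omega
    have hp' : Relation.ReflTransGen (fun a b => PRel M γ a b) u v := by simpa [PRel] using hp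
    clear hp
    induction hp' using Relation.ReflTransGen.head_induction_on with
    | refl =>
      have hsatu : Sat M v (.dia (.star γ) ψ) :=
        sat_dia.2 ⟨v, by simp [PRel]; exact .refl, hch.head_sat⟩
      refine ⟨[], .cons _ _ _ hsatu ⟨Red.star1 γ ψ, rfl⟩ hch, ?_⟩
      rintro p hp' hevp
      simp only [List.mem_singleton] at hp'
      subst hp'
      rw [show ex (Fml.dia (.star γ) ψ) = ex ψ from ex_dia_ev hevp, hex]
    | head h1 h2 ih =>
      rename_i a c
      obtain ⟨ρ₁, hc₁, hcoh₁⟩ := ih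
      have hevs : IsEv (.dia (.star γ) ψ) := ⟨γ, ψ, .base⟩
      have hexs : ex (.dia (.star γ) ψ) = t := by rw [ex_dia_ev hevs, hex]
      obtain ⟨ρ₂, hc₂, hcoh₂⟩ :=
        ihn γ hszγ a c h1 (.dia (.star γ) ψ) (ρ₁ ++ (v, ψ) :: σ) t hevs hexs hc₁
      have hsatu : Sat M a (.dia (.star γ) ψ) :=
        sat_dia.2 ⟨v, by simp [PRel]; exact .head h1 h2, hch.head_sat⟩
      have hc₃ : Ch M ((a, .dia (.star γ) ψ) :: (a, .dia γ (.dia (.star γ) ψ)) ::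
          (ρ₂ ++ (c, .dia (.star γ) ψ) :: (ρ₁ ++ (v, ψ) :: σ))) :=
        .cons _ _ _ hsatu ⟨Red.star2 γ ψ, rfl⟩ hc₂
      refine ⟨(a, .dia γ (.dia (.star γ) ψ)) :: (ρ₂ ++ (c, .dia (.star γ) ψ) :: ρ₁), ?_, ?_⟩
      · simpa using hc₃
      · intro p hp' hevp
        simp only [List.mem_cons, List.mem_append] at hp'
        rcases hp' with rfl | hp' | hp' | rfl | hp'
        · exact hexs
        · exact hcoh₂ p (by simp [hp']) hevp
        · exact hcoh₂ p (by simp [hp']) hevp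
        · exact hexs
        · exact hcoh₁ p (by simp [hp']) hevp
  | test θ =>
    intro u v hp ψ σ t hev hex hch
    obtain ⟨rfl, hθ⟩ : u = v ∧ Sat M u θ := by simpa [PRel] using hp
    have hsatu : Sat M u (.dia (.test θ) ψ) :=
      sat_dia.2 ⟨u, by simp [PRel]; exact hθ, hch.head_sat⟩
    refine ⟨[], .cons _ _ _ hsatu ⟨Red.test θ ψ, rfl⟩ hch, ?_⟩
    rintro p hp' hevp
    simp only [List.mem_singleton] at hp'
    subst hp'
    rw [show ex (Fml.dia (.test θ) ψ) = ex ψ from ex_dia_ev hevp, hex]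

lemma chain_of_prel (γ : Prog) (u v : W) (hp : PRel M γ u v)
    (ψ : Fml) (σ : List (W × Fml)) (t : Fml) (hev : IsEv ψ) (hex : ex ψ = t)
    (hch : Ch M ((v, ψ) :: σ)) :
    ∃ ρ, Ch M ((u, .dia γ ψ) :: (ρ ++ (v, ψ) :: σ)) ∧
      ∀ p ∈ (u, Fml.dia γ ψ) :: ρ, IsEv p.2 → ex p.2 = t :=
  chain_of_prel_aux (psize γ) γ le_rfl u v hp ψ σ t hev hex hch

end AuxDev2
section AuxDev3
variable {W : Type} {M : Model W}

lemma fsize_pos (φ : Fml) : 0 < fsize φ := by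
  cases φ with
  | var p => simp [fsize]
  | neg φ => cases φ <;> simp [fsize]
  | and φ ψ => simp only [fsize]; omega
  | or φ ψ => simp only [fsize]; omega
  | dia γ φ => have := psize_pos γ; simp only [fsize]; omega
  | box γ φ => have := psize_pos γ; simp only [fsize]; omega

lemma chain_star (g : Prog) (ψ : Fml) (u v : W)
    (hp : Relation.ReflTransGen (fun a b => PRel M g a b) u v) (hψ : Sat M v ψ) :
    ∃ σ, Ch M ((u, .dia (.star g) ψ) :: σ) ∧
      (((u, .dia (.star g) ψ) :: σ).getLast? = some (v, ψ)) ∧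
      ∀ p ∈ (u, .dia (.star g) ψ) :: σ, IsEv p.2 → ex p.2 = ex ψ := by
  induction hp using Relation.ReflTransGen.head_induction_on with
  | refl =>
    have hsatu : Sat M v (.dia (.star g) ψ) :=
      sat_dia.2 ⟨v, by simp [PRel]; exact .refl, hψ⟩
    have hstep : ChainStep M (v, .dia (.star g) ψ) (v, ψ) := ⟨Red.star1 g ψ, rfl⟩
    refine ⟨[(v, ψ)], .cons _ _ _ hsatu hstep (.sing _ hψ), by simp, ?_⟩
    intro p hp' hevp
    rcases List.mem_cons.1 hp' with rfl | hp'
    · exact ex_dia_ev hevp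
    · simp only [List.mem_singleton] at hp'
      subst hp'
      rfl
  | head h1 h2 ih =>
    rename_i a c
    obtain ⟨σ₁, hc₁, hl₁, hcoh₁⟩ := ih
    have hevs : IsEv (Fml.dia (.star g) ψ) := ⟨g, ψ, .base⟩
    obtain ⟨ρ₂, hc₂, hcoh₂⟩ :=
      chain_of_prel g a c h1 (.dia (.star g) ψ) σ₁ (ex ψ) hevs (ex_dia_ev hevs) hc₁
    have hsatu : Sat M a (.dia (.star g) ψ) :=
      sat_dia.2 ⟨v, by simp [PRel]; exact .head h1 h2, hψ⟩
    have hstep : ChainStep M (a, .dia (.star g) ψ) (a, .dia g (.dia (.star g) ψ)) :=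
      ⟨Red.star2 g ψ, rfl⟩
    refine ⟨(a, .dia g (.dia (.star g) ψ)) :: (ρ₂ ++ (c, .dia (.star g) ψ) :: σ₁),
      .cons _ _ _ hsatu hstep hc₂, ?_, ?_⟩
    · rw [show ((a, Fml.dia (.star g) ψ) :: (a, Fml.dia g (.dia (.star g) ψ)) ::
          (ρ₂ ++ (c, Fml.dia (.star g) ψ) :: σ₁)) =
          ((a, Fml.dia (.star g) ψ) :: ((a, Fml.dia g (.dia (.star g) ψ)) :: ρ₂) ++
            (c, Fml.dia (.star g) ψ) :: σ₁) by simp,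
        gl_append _ _ (by simp)]
      exact hl₁
    · intro p hp' hevp
      simp only [List.mem_cons, List.mem_append] at hp'
      rcases hp' with rfl | rfl | hp' | hp'
      · exact ex_dia_ev hevs
      · exact hcoh₂ _ (by simp) hevp
      · exact hcoh₂ p (by simp [hp']) hevp
      · exact hcoh₁ p (by simp [hp']) hevp

lemma chain_of_ev : ∀ (n : ℕ) (φ : Fml), fsize φ ≤ n → IsEv φ → ∀ u, Sat M u φ →
    ∃ σ, Ch M ((u, φ) :: σ) ∧ (∃ z : W, ((u, φ) :: σ).getLast? = some (z, ex φ)) ∧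
      ∀ p ∈ (u, φ) :: σ, IsEv p.2 → ex p.2 = ex φ := by
  intro n
  induction n with
  | zero =>
    intro φ hn
    have : 0 < fsize φ := fsize_pos φ
    omega
  | succ n ih =>
    intro φ hn hev u hsat
    obtain ⟨γ, ψ, rfl⟩ := isEv_shape hev
    rw [sat_dia] at hsat
    obtain ⟨v, hp, hψ⟩ := hsat
    by_cases hψev : IsEv ψ
    · have hfs : fsize ψ ≤ n := by
        have h1 := psize_pos γ
        have h2 : fsize (Fml.dia γ ψ) = psize γ + fsize ψ := by simp [fsize]
        omega
      obtain ⟨σ₁, hc₁, ⟨z, hl₁⟩, hcoh₁⟩ := ih ψ hfs hψev v hψ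
      obtain ⟨ρ, hc₂, hcoh₂⟩ := chain_of_prel γ u v hp ψ σ₁ (ex ψ) hψev rfl hc₁
      have hexφ : ex (Fml.dia γ ψ) = ex ψ := ex_dia_ev hev
      refine ⟨ρ ++ (v, ψ) :: σ₁, hc₂, ⟨z, ?_⟩, ?_⟩
      · rw [gl_cons_append _ _ _ (by simp), hl₁, hexφ]
      · intro p hp' hevp
        rw [hexφ]
        rcases List.mem_cons.1 hp' with rfl | hp'
        · exact hcoh₂ _ (by simp) hevp
        · rcases List.mem_append.1 hp' with hp' | hp'
          · exact hcoh₂ p (by simp [hp']) hevp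
          · exact hcoh₁ p hp' hevp
    · rcases isEv_dia.1 hev with ⟨g, rfl⟩ | h2
      · have hp' : Relation.ReflTransGen (fun a b => PRel M g a b) u v := by
          simpa [PRel] using hp
        obtain ⟨σ₁, hc₁, hl₁, hcoh₁⟩ := chain_star g ψ u v hp' hψ
        have hexφ : ex (Fml.dia (.star g) ψ) = ex ψ := ex_dia_ev hev
        refine ⟨σ₁, hc₁, ⟨v, ?_⟩, ?_⟩
        · rw [hl₁, hexφ, ex_not_ev hψev]
        · intro p hp' hevp
          rw [hexφ]
          exact hcoh₁ p hp' hevp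
      · exact absurd h2 hψev

lemma mc_to_ch {σ : List (W × Fml)} {w : W} {φ t : Fml} (h : ModelChain M w φ t σ) :
    Ch M σ ∧ σ.head? = some (w, φ) ∧ ∃ z, σ.getLast? = some (z, t) := by
  obtain ⟨hne, hh, hl, hsat, hstep⟩ := h
  refine ⟨ch_of σ hne hsat hstep, ?_, ?_⟩
  · rw [List.head?_eq_head hne, hh]
  · exact ⟨(σ.getLast hne).1, by rw [List.getLast?_eq_getLast hne, ← hl]⟩

lemma ch_to_mc {σ : List (W × Fml)} {w : W} {φ t : Fml} (hc : Ch M σ)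
    (hh : σ.head? = some (w, φ)) (hl : ∃ z, σ.getLast? = some (z, t)) :
    ModelChain M w φ t σ := by
  obtain ⟨z, hz⟩ := hl
  refine ⟨hc.ne_nil, ?_, ?_, hc.sat, hc.step⟩
  · rw [List.head?_eq_head hc.ne_nil] at hh
    exact Option.some_injective _ hh
  · rw [List.getLast?_eq_getLast hc.ne_nil] at hz
    rw [Option.some_injective _ hz]

end AuxDev3
section AuxDev4
variable {W : Type} {M : Model W}

lemma ch_dedup : ∀ (n : ℕ) (σ : List (W × Fml)), σ.length ≤ n → Ch M σ →
    ∃ σ', Ch M σ' ∧ σ'.Nodup ∧ σ'.head? = σ.head? ∧ σ'.getLast? = σ.getLast? ∧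
      ∀ p ∈ σ', p ∈ σ := by
  intro n
  induction n with
  | zero =>
    intro σ hlen hc
    have := hc.ne_nil
    cases σ with
    | nil => exact absurd rfl this
    | cons p l => simp at hlen
  | succ n ih =>
    intro σ hlen hc
    cases σ with
    | nil => exact absurd rfl hc.ne_nil
    | cons p l =>
      by_cases hp : p ∈ l
      · obtain ⟨s, t2, rfl⟩ := List.append_of_mem hp
        have hch2 : Ch M (p :: t2) := by
          refine Ch.suffix (p :: s) (p :: t2) ?_ (by simp)
          simpa using hc
        have hlen2 : (p :: t2).length ≤ n := by
          simp at hlen ⊢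
          omega
        obtain ⟨σ', h1, h2, h3, h4, h5⟩ := ih _ hlen2 hch2
        refine ⟨σ', h1, h2, by simpa using h3, ?_, ?_⟩
        · rw [h4, gl_cons_append _ _ _ (by simp)]
        · intro q hq
          have := h5 q hq
          rcases List.mem_cons.1 this with rfl | hq'
          · simp
          · simp [hq']
      · cases l with
        | nil => exact ⟨[p], hc, by simp, rfl, rfl, fun q hq => hq⟩
        | cons q l' =>
          have hc2 : Ch M (q :: l') := hc.tail (by simp)
          have hstep : ChainStep M p q := by
            cases hc with
            | cons _ _ _ _ hs _ => exact hs
          obtain ⟨σ', h1, h2, h3, h4, h5⟩ := ih (q :: l') (by simp at hlen ⊢; omega) hc2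
          obtain ⟨m, rfl⟩ : ∃ m, σ' = q :: m := by
            cases σ' with
            | nil => simp at h3
            | cons r m =>
              cases (by simpa using h3 : r = q)
              exact ⟨m, rfl⟩
          refine ⟨p :: q :: m, .cons _ _ _ hc.head_sat hstep h1, ?_, by simp, ?_, ?_⟩
          · rw [List.nodup_cons]
            refine ⟨fun hmem => hp ?_, h2⟩
            exact h5 p hmem
          · rw [List.getLast?_cons_cons, h4, List.getLast?_cons_cons]
          · intro r hr
            rcases List.mem_cons.1 hr with rfl | hr'
            · simp
            · simp [h5 r hr']

end AuxDev4
section AuxDev5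
variable {W : Type} {M : Model W}

lemma splice (w : W) (chn : Fml → Option (List (W × Fml))) (t : Fml)
    (H3 : ∀ ψ τ, IsEv ψ → chn ψ = some τ → ModelChain M w ψ (ex ψ) τ ∧
      (∀ i (hi : i < τ.length) χ, τ.get ⟨i, hi⟩ = (w, χ) → IsEv χ → chn χ = some (τ.drop i))) :
    ∀ (n : ℕ) (σ : List (W × Fml)), σ.length ≤ n → Ch M σ → σ.Nodup →
    (∃ z, σ.getLast? = some (z, t)) →
    (∀ p ∈ σ, p.1 = w → IsEv p.2 → ex p.2 = t) →
    ∃ SS, Ch M SS ∧ SS.head? = σ.head? ∧ (∃ z, SS.getLast? = some (z, t)) ∧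
      (∀ i (hI : i < SS.length) χ, SS.get ⟨i, hI⟩ = (w, χ) → IsEv χ →
        ((chn χ = none ∧ ex χ = t ∧
            ∀ i' (hI' : i' < SS.length), SS.get ⟨i', hI'⟩ = (w, χ) → i' = i)
          ∨ chn χ = some (SS.drop i))) ∧
      (∀ p ∈ SS, p.1 = w → IsEv p.2 → chn p.2 = none → p ∈ σ) := by
  intro n
  induction n with
  | zero =>
    intro σ hlen hc
    have := hc.ne_nil
    cases σ with
    | nil => exact absurd rfl this
    | cons p l => simp at hlen
  | succ n ih =>
    intro σ hlen hc hnd hlast hcoh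
    cases σ with
    | nil => exact absurd rfl hc.ne_nil
    | cons p l =>
      by_cases hA : p.1 = w ∧ IsEv p.2 ∧ (chn p.2).isSome
      · -- splice in the existing chain for p.2
        obtain ⟨hpw, hpev, hps⟩ := hA
        obtain ⟨τ, hτ⟩ := Option.isSome_iff_exists.1 hps
        obtain ⟨hmc, hself⟩ := H3 p.2 τ hpev hτ
        obtain ⟨hcτ, hhτ, z', hlτ⟩ := mc_to_ch hmc
        have hext : ex p.2 = t := hcoh p (by simp) hpw hpev
        refine ⟨τ, hcτ, ?_, ⟨z', by rw [hlτ, hext]⟩, ?_, ?_⟩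
        · rw [hhτ]
          simp only [List.head?_cons]
          rw [show ((w, p.2) : W × Fml) = p by rw [← hpw]]
        · intro i hI χ hget hevχ
          exact Or.inr (hself i hI χ hget hevχ)
        · intro q hq hqw hqev hqn
          obtain ⟨⟨i, hi⟩, hgi⟩ := List.get_of_mem hq
          have : chn q.2 = some (τ.drop i) := by
            refine hself i hi q.2 ?_ hqev
            rw [hgi, ← hqw]
          rw [hqn] at this
          exact absurd this (by simp)
      · have hB : p.1 = w → IsEv p.2 → chn p.2 = none := by
          intro h1 h2
          rw [← Option.not_isSome_iff_eq_none]
          exact fun h3 => hA ⟨h1, h2, h3⟩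
        cases l with
        | nil =>
          refine ⟨[p], hc, rfl, hlast, ?_, fun q hq _ _ _ => hq⟩
          intro i hI χ hget hevχ
          have hi0 : i = 0 := by simp at hI; omega
          subst hi0
          have hpeq : p = (w, χ) := hget
          have hp2 : p.2 = χ := by rw [hpeq]
          have hpw : p.1 = w := by rw [hpeq]
          have hpev : IsEv p.2 := by rw [hp2]; exact hevχ
          refine Or.inl ⟨hp2 ▸ hB hpw hpev, hp2 ▸ hcoh p (by simp) hpw hpev, ?_⟩
          intro i' hI' _
          simp at hI'
          omega
        | cons q l' =>
          have hc2 : Ch M (q :: l') := hc.tail (by simp)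
          have hstep : ChainStep M p q := by
            cases hc with
            | cons _ _ _ _ hs _ => exact hs
          have hlast2 : ∃ z, (q :: l').getLast? = some (z, t) := by
            obtain ⟨z, hz⟩ := hlast
            exact ⟨z, by rw [← hz, List.getLast?_cons_cons]⟩
          obtain ⟨St, hcSS, hhSS, hlSS, hdisj, hsub⟩ := ih (q :: l')
            (by simp at hlen ⊢; omega) hc2 (List.nodup_cons.1 hnd).2 hlast2
            (fun r hr => hcoh r (by simp [hr]))
          obtain ⟨m, rfl⟩ : ∃ m, St = q :: m := by
            cases St with
            | nil => simp at hhSS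
            | cons r m =>
              cases (by simpa using hhSS : r = q)
              exact ⟨m, rfl⟩
          refine ⟨p :: q :: m, .cons _ _ _ hc.head_sat hstep hcSS, by simp, ?_, ?_, ?_⟩
          · obtain ⟨z, hz⟩ := hlSS
            exact ⟨z, by rw [List.getLast?_cons_cons, hz]⟩
          · intro i hI χ hget hevχ
            cases i with
            | zero =>
              have hpeq : p = (w, χ) := hget
              have hpw : p.1 = w := by rw [hpeq]
              have hp2 : p.2 = χ := by rw [hpeq]
              have hpev : IsEv p.2 := by rw [hp2]; exact hevχ
              refine Or.inl ⟨hp2 ▸ hB hpw hpev, hp2 ▸ hcoh p (by simp) hpw hpev, ?_⟩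
              · intro i' hI' hget'
                cases i' with
                | zero => rfl
                | succ k =>
                  exfalso
                  have hk : k < (q :: m).length := by simpa using hI'
                  have hgk : (q :: m).get ⟨k, hk⟩ = (w, χ) := by
                    simpa using hget'
                  have hmemk : ((w, χ) : W × Fml) ∈ q :: m := hgk ▸ List.get_mem _ ⟨k, hk⟩
                  have : ((w, χ) : W × Fml) ∈ q :: l' :=
                    hsub _ hmemk rfl hevχ (hp2 ▸ hB hpw hpev)
                  exact (List.nodup_cons.1 hnd).1 (hpeq ▸ this)
            | succ k =>
              have hk : k < (q :: m).length := by simpa using hI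
              have hgk : (q :: m).get ⟨k, hk⟩ = (w, χ) := by simpa using hget
              rcases hdisj k hk χ hgk hevχ with ⟨hn1, hn2, hn3⟩ | hsome
              · refine Or.inl ⟨hn1, hn2, ?_⟩
                intro i' hI' hget'
                cases i' with
                | zero =>
                  exfalso
                  have hpeq : p = (w, χ) := hget'
                  have hmemk : ((w, χ) : W × Fml) ∈ q :: m := hgk ▸ List.get_mem _ ⟨k, hk⟩
                  have : ((w, χ) : W × Fml) ∈ q :: l' := hsub _ hmemk rfl hevχ hn1
                  exact (List.nodup_cons.1 hnd).1 (hpeq ▸ this)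
                | succ k' =>
                  have hk' : k' < (q :: m).length := by simpa using hI'
                  have hgk' : (q :: m).get ⟨k', hk'⟩ = (w, χ) := by simpa using hget'
                  have := hn3 k' hk' hgk'
                  omega
              · exact Or.inr (by rw [hsome]; rfl)
          · intro r hr hrw hrev hrn
            rcases List.mem_cons.1 hr with rfl | hr'
            · simp
            · exact List.mem_cons.2 (Or.inr (hsub r hr' hrw hrev hrn))

end AuxDev5

/-- Prop. annsat (1): annotated satisfaction can be extended by a
satisfied formula which is not an eventuality or is unannotated. -/
theorem annsat_extend {W : Type} (M : Model W) (w : W) (Γ : Set Fml) (hfin : Γ.Finite)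
    (ann : Fml → Option Fml) (hann : IsAnnotation Γ ann)
    (chn : Fml → Option (List (W × Fml))) (h : AnnSat M w chn Γ ann)
    (φ : Fml) (hφ : Sat M w φ) (hside : ¬ IsEv φ ∨ ann φ = none) :
    ∃ chn', (∀ ψ σ, chn ψ = some σ → chn' ψ = some σ) ∧
      AnnSat M w chn' (Γ ∪ {φ}) ann := by
  classical
  obtain ⟨H1, H2, H3⟩ := h
  by_cases heasy : ¬ IsEv φ ∨ (chn φ).isSome
  · -- chn itself works
    refine ⟨chn, fun ψ σ hs => hs, ?_, ?_, H3⟩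
    · intro ψ hψ
      rcases hψ with hψ | hψ
      · exact H1 ψ hψ
      · rw [Set.mem_singleton_iff] at hψ
        subst hψ
        exact hφ
    · intro ψ hψ hevψ
      rcases hψ with hψ | hψ
      · exact H2 ψ hψ hevψ
      · rw [Set.mem_singleton_iff] at hψ
        subst hψ
        rcases heasy with hc | hc
        · exact absurd hevψ hc
        · exact hc
  · push_neg at heasy
    obtain ⟨hev, hcs⟩ := heasy
    have hcn : chn φ = none := Option.not_isSome_iff_eq_none.1 hcs
    have H3' : ∀ ψ τ, IsEv ψ → chn ψ = some τ → ModelChain M w ψ (ex ψ) τ ∧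
        (∀ i (hi : i < τ.length) χ, τ.get ⟨i, hi⟩ = (w, χ) → IsEv χ →
          chn χ = some (τ.drop i)) :=
      fun ψ τ hev' hs => ⟨(H3 ψ τ hev' hs).1, (H3 ψ τ hev' hs).2.1⟩
    obtain ⟨σ0, hc0, ⟨z0, hl0⟩, hcoh0⟩ := chain_of_ev (fsize φ) φ le_rfl hev w hφ
    obtain ⟨σ1, hc1, hnd1, hh1, hl1, hsub1⟩ := ch_dedup ((w, φ) :: σ0).length _ le_rfl hc0
    have hh1' : σ1.head? = some (w, φ) := by rw [hh1]; rfl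
    have hl1' : ∃ z, σ1.getLast? = some (z, ex φ) := ⟨z0, by rw [hl1, hl0]⟩
    have hcoh1 : ∀ p ∈ σ1, p.1 = w → IsEv p.2 → ex p.2 = ex φ :=
      fun p hp _ hev' => hcoh0 p (hsub1 p hp) hev'
    obtain ⟨SS, hcS, hhS, ⟨zS, hzS⟩, hdisj, hsubS⟩ :=
      splice w chn (ex φ) H3' σ1.length σ1 le_rfl hc1 hnd1 hl1' hcoh1
    have hhS' : SS.head? = some (w, φ) := by rw [hhS, hh1']
    have hget0 : ∃ h0 : 0 < SS.length, SS.get ⟨0, h0⟩ = (w, φ) := by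
      cases SS with
      | nil => simp at hhS'
      | cons a l => exact ⟨by simp, by simpa using hhS'⟩
    refine ⟨fun ψ => if hs : (chn ψ).isSome then chn ψ
        else if hP : IsEv ψ ∧ ∃ i, ∃ hI : i < SS.length, SS.get ⟨i, hI⟩ = (w, ψ)
        then some (SS.drop hP.2.choose) else none, ?_, ?_, ?_, ?_⟩
    · intro ψ σ hs
      beta_reduce
      rw [dif_pos (by rw [hs]; rfl)]
      exact hs
    · intro ψ hψ
      rcases hψ with hψ | hψ
      · exact H1 ψ hψ
      · rw [Set.mem_singleton_iff] at hψ
        subst hψ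
        exact hφ
    · intro ψ hψ hevψ
      rcases hψ with hψ | hψ
      · have := H2 ψ hψ hevψ
        beta_reduce
        rw [dif_pos this]
        exact this
      · rw [Set.mem_singleton_iff] at hψ
        subst hψ
        beta_reduce
        rw [dif_neg hcs, dif_pos (⟨hev, 0, hget0⟩ :
          IsEv ψ ∧ ∃ i, ∃ hI : i < SS.length, SS.get ⟨i, hI⟩ = (w, ψ))]
        rfl
    · intro ψ σψ hevψ hsome
      beta_reduce at hsome
      by_cases hs : (chn ψ).isSome
      · rw [dif_pos hs] at hsome
        obtain ⟨mc, selfc, annc⟩ := H3 ψ σψ hevψ hsome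
        refine ⟨mc, ?_, annc⟩
        intro i hI χ hget hevχ
        have hcχ := selfc i hI χ hget hevχ
        beta_reduce
        rw [dif_pos (by rw [hcχ]; rfl)]
        exact hcχ
      · rw [dif_neg hs] at hsome
        by_cases hP : IsEv ψ ∧ ∃ i, ∃ hI : i < SS.length, SS.get ⟨i, hI⟩ = (w, ψ)
        · rw [dif_pos hP] at hsome
          obtain rfl : SS.drop hP.2.choose = σψ := Option.some.inj hsome
          obtain ⟨hI0, hget0'⟩ := hP.2.choose_spec
          rcases hdisj hP.2.choose hI0 ψ hget0' hevψ with ⟨hnone, hexeq, huniq⟩ | hsome'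
          · refine ⟨?_, ?_, ?_⟩
            · refine ch_to_mc (hcS.drop _ hI0) ?_ ?_
              · rw [List.head?_drop, List.getElem?_eq_getElem hI0]
                exact congrArg some hget0'
              · refine ⟨zS, ?_⟩
                rw [gl_drop _ _ hI0, hzS, hexeq]
            · intro k hk χ hgetk hevχ
              have hglobal : hP.2.choose + k < SS.length := by
                rw [List.length_drop] at hk
                omega
              have hgetg : SS.get ⟨hP.2.choose + k, hglobal⟩ = (w, χ) := by
                simpa [List.getElem_drop] using hgetk
              rcases hdisj (hP.2.choose + k) hglobal χ hgetg hevχ with ⟨hn1, hn2, hn3⟩ | hsm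
              · beta_reduce
                rw [dif_neg (by rw [hn1]; simp)]
                have hPχ : IsEv χ ∧ ∃ i, ∃ hI : i < SS.length, SS.get ⟨i, hI⟩ = (w, χ) :=
                  ⟨hevχ, hP.2.choose + k, hglobal, hgetg⟩
                rw [dif_pos hPχ]
                obtain ⟨hIc, hgc⟩ := hPχ.2.choose_spec
                have heq : hPχ.2.choose = hP.2.choose + k := hn3 _ hIc hgc
                rw [heq, List.drop_drop]
              · beta_reduce
                rw [dif_pos (by rw [hsm]; rfl), hsm, List.drop_drop]
            · intro ψ' hψ'
              have hmem := (hann ψ ψ' hψ').1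
              exact absurd (H2 ψ hmem hevψ) hs
          · exact absurd (by rw [hsome']; rfl : (chn ψ).isSome = true) hs
        · rw [dif_neg hP] at hsome
          exact absurd hsome (by simp)
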